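/- Let n ≥ 4 be an integer with n ≡ 0 (mod 4) and n ≢ 0 (mod 8), m a positive integer, and C a code of length m over 𝔽₄. Then: (1) Γ_C is integral if and only if C ⊆ C̄^⊥; (2) Γ_C is unimodular if and only if C is Hermitian self-dual; (3) Γ_C is even if and only if 2 divides wt_H(w) for every w ∈ C; (4) Γ_C is even unimodular if and only if C is Hermitian self-dual. -/

import Mathlib

open Finset

/-- The field with four elements. -/
abbrev F4 : Type := GaloisField 2 2

/-- The bilinear form of `m` copies of the dual `D_n` root lattice (`n` even),
written in the dual basis: `B(x,y) = Σ_i Σ_j Σ_s (1/4)(n − 2|j−s|) x_{ij} y_{is}`. -/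
noncomputable def BDev (n m : ℕ) (x y : Fin m → Fin n → ℚ) : ℚ :=
  ∑ i, ∑ j : Fin n, ∑ s : Fin n,
    (1 / 4) * ((n : ℚ) - 2 * |((j : ℕ) : ℚ) - ((s : ℕ) : ℚ)|) * x i j * y i s

/-- `a_i(x)`: the sum of the odd-numbered (`1`-indexed) coordinates, mod 2. -/
def aD (n m : ℕ) (x : Fin m → Fin n → ℤ) (i : Fin m) : ZMod 2 :=
  ((∑ j ∈ Finset.univ.filter (fun j : Fin n => (j : ℕ) % 2 = 0), x i j : ℤ) : ZMod 2)

/-- `b_i(x)`: the sum of the even-numbered (`1`-indexed) coordinates, mod 2. -/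
def bD (n m : ℕ) (x : Fin m → Fin n → ℤ) (i : Fin m) : ZMod 2 :=
  ((∑ j ∈ Finset.univ.filter (fun j : Fin n => (j : ℕ) % 2 = 1), x i j : ℤ) : ZMod 2)

/-- The reduction map `ρ` to `𝔽₄^m`, `ρ(x)_i = a_i ω + b_i ω²`,
relative to a chosen generator `ω` of `𝔽₄`. -/
noncomputable def rhoF4 (ω : F4) (n m : ℕ) (x : Fin m → Fin n → ℤ) :
    Fin m → F4 :=
  fun i => algebraMap (ZMod 2) F4 (aD n m x i) * ω +
    algebraMap (ZMod 2) F4 (bD n m x i) * ω ^ 2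

/-- Coordinatewise conjugation `x̄ = x²` on `𝔽₄^m`. -/
noncomputable def conjF4 (m : ℕ) (w : Fin m → F4) : Fin m → F4 :=
  fun i => (w i) ^ 2

open scoped Classical in
/-- `N₀`: the number of coordinates equal to `0`. -/
noncomputable def N0F (m : ℕ) (w : Fin m → F4) : ℕ :=
  (Finset.univ.filter (fun i => w i = 0)).card

open scoped Classical in
/-- `N₂`: the number of coordinates equal to `1`. -/
noncomputable def N2F (m : ℕ) (w : Fin m → F4) : ℕ :=
  (Finset.univ.filter (fun i => w i = 1)).card

/-- `N₁ = m − N₀ − N₂`. -/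
noncomputable def N1F (m : ℕ) (w : Fin m → F4) : ℕ :=
  m - N0F m w - N2F m w

/-- The Lee weight `wt_L = N₁ + 2N₂`. -/
noncomputable def wtLF (m : ℕ) (w : Fin m → F4) : ℕ :=
  N1F m w + 2 * N2F m w

/-- The Hamming weight `wt_H = N₁ + N₂`. -/
noncomputable def wtHF (m : ℕ) (w : Fin m → F4) : ℕ :=
  N1F m w + N2F m w

/-- The dual code of a set of codewords over `𝔽₄`. -/
def dualCodeF4 (m : ℕ) (C : Set (Fin m → F4)) : Set (Fin m → F4) :=
  {w | ∀ v ∈ C, ∑ i, w i * v i = 0}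

/-- The lattice `Γ_C` constructed from the code `C`. -/
def GammaF4 (ω : F4) (n m : ℕ) (C : Set (Fin m → F4)) :
    Set (Fin m → Fin n → ℤ) :=
  {x | rhoF4 ω n m x ∈ C}

/-- Coercion of an integral vector to a rational vector. -/
def toQD (n m : ℕ) (x : Fin m → Fin n → ℤ) : Fin m → Fin n → ℚ :=
  fun i j => (x i j : ℚ)

/-- The dual lattice `Γ_C^*`, taken inside the `ℚ`-valued vectors. -/
noncomputable def dualLatticeF4 (ω : F4) (n m : ℕ) (C : Set (Fin m → F4)) :
    Set (Fin m → Fin n → ℚ) :=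
  {z | ∀ y ∈ GammaF4 ω n m C, ∃ k : ℤ, (k : ℚ) = BDev n m z (toQD n m y)}

/-- `Γ_C` is integral. -/
def IsIntegralF4 (ω : F4) (n m : ℕ) (C : Set (Fin m → F4)) : Prop :=
  ∀ x ∈ GammaF4 ω n m C, ∀ y ∈ GammaF4 ω n m C,
    ∃ k : ℤ, (k : ℚ) = BDev n m (toQD n m x) (toQD n m y)

/-- `Γ_C` is even. -/
def IsEvenLatF4 (ω : F4) (n m : ℕ) (C : Set (Fin m → F4)) : Prop :=
  IsIntegralF4 ω n m C ∧ ∀ x ∈ GammaF4 ω n m C,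
    ∃ k : ℤ, ((2 * k : ℤ) : ℚ) = BDev n m (toQD n m x) (toQD n m x)

/-- `Γ_C` is unimodular. -/
def IsUnimodularF4 (ω : F4) (n m : ℕ) (C : Set (Fin m → F4)) : Prop :=
  dualLatticeF4 ω n m C = toQD n m '' GammaF4 ω n m C

/-- A code over `𝔽₄` is Hermitian self-dual if `C = C̄^⊥`. -/
def IsHermitianSelfDualF4 (m : ℕ) (C : Set (Fin m → F4)) : Prop :=
  C = dualCodeF4 m (conjF4 m '' C)



-- ===== auxiliary development =====

noncomputable def phi4 : ZMod 2 →+* F4 := algebraMap (ZMod 2) F4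
lemma phi4_sq (e : ZMod 2) : phi4 e * phi4 e = phi4 e := by
  rw [← map_mul]; congr 1; revert e; decide
lemma F4_two : (1 : F4) + 1 = 0 := by
  have h0 : ((1:ZMod 2) + 1) = 0 := by decide
  calc (1:F4) + 1 = phi4 1 + phi4 1 := by rw [map_one]
    _ = phi4 (1+1) := by rw [map_add]
    _ = 0 := by rw [h0, map_zero]
lemma F4_add_self (t : F4) : t + t = 0 := by
  have h : t + t = (1+1) * t := by ring
  rw [h, F4_two, zero_mul]
lemma F4_add_eq_zero {s t : F4} (h : s + t = 0) : s = t := by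
  have := F4_add_self t
  calc s = s + (t + t) := by rw [this, add_zero]
    _ = (s + t) + t := by ring
    _ = t := by rw [h, zero_add]

section omega4
variable (ω : F4) (hω : ω^2 = ω + 1)
include hω

lemma F4_omega3 : ω^3 = 1 := by
  have h1 : ω^3 = (ω+1) * ω := by rw [← hω]; ring
  have h2 : (ω+1) * ω = ω^2 + ω := by ring
  rw [h1, h2, hω]
  have h3 : ω + 1 + ω = (ω + ω) + 1 := by ring
  rw [h3, F4_add_self, zero_add]

lemma F4_omega4 : ω^4 = ω := by
  have h : ω^4 = ω^3 * ω := by ring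
  rw [h, F4_omega3 ω hω, one_mul]

-- ω·(c ω + d ω²) = d ω + (c+d) ω²
lemma F4_scale (c d : ZMod 2) :
    ω * (phi4 c * ω + phi4 d * ω^2) = phi4 d * ω + phi4 (c + d) * ω^2 := by
  have h3 := F4_omega3 ω hω
  have expand : ω * (phi4 c * ω + phi4 d * ω^2) = phi4 c * ω^2 + phi4 d * ω^3 := by ring
  rw [expand, h3, mul_one, map_add]
  have rhs : phi4 d * ω + (phi4 c + phi4 d) * ω^2 = phi4 d * (ω + ω^2) + phi4 c * ω^2 := by ring
  rw [rhs]
  have hsum : ω + ω^2 = 1 := by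
    rw [hω]
    have : ω + (ω + 1) = (ω + ω) + 1 := by ring
    rw [this, F4_add_self, zero_add]
  rw [hsum, mul_one]
  ring

-- (a ω + b ω²)·(c ω + d ω²)² = (a(c+d)+bd) + (ad+bc) ω
lemma F4_herm (a b c d : ZMod 2) :
    (phi4 a * ω + phi4 b * ω^2) * (phi4 c * ω + phi4 d * ω^2)^2
      = phi4 (a*(c+d) + b*d) + phi4 (a*d + b*c) * ω := by
  have h3 := F4_omega3 ω hω
  have h4 := F4_omega4 ω hω
  have hsq : (phi4 c * ω + phi4 d * ω^2)^2
      = phi4 c * ω^2 + phi4 d * ω := by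
    have e1 : (phi4 c * ω + phi4 d * ω^2)^2
        = ((phi4 c * phi4 c) * ω^2 + (phi4 d * phi4 d) * ω^4)
          + ((phi4 c * phi4 d * ω^3) + (phi4 c * phi4 d * ω^3)) := by ring
    rw [e1, F4_add_self, add_zero, phi4_sq, phi4_sq, h4]
  rw [hsq]
  have e2 : (phi4 a * ω + phi4 b * ω^2) * (phi4 c * ω^2 + phi4 d * ω)
      = (phi4 a * phi4 c) * ω^3 + (phi4 a * phi4 d) * ω^2
        + (phi4 b * phi4 c) * ω^4 + (phi4 b * phi4 d) * ω^3 := by ring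
  rw [e2, h3, h4, hω]
  simp only [map_add, map_mul]
  ring
end omega4

section omega4b
variable (ω : F4) (hω : ω^2 = ω + 1)
include hω

lemma F4_omega_ne0 : ω ≠ 0 := by intro h; rw [h] at hω; simp at hω
lemma F4_omega_ne1 : ω ≠ 1 := by intro h; rw [h] at hω; simp at hω

lemma F4_basis (a b : ZMod 2) (h : phi4 a + phi4 b * ω = 0) : a = 0 ∧ b = 0 := by
  have ha := (by decide : ∀ c : ZMod 2, c = 0 ∨ c = 1) a
  have hb := (by decide : ∀ c : ZMod 2, c = 0 ∨ c = 1) b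
  rcases ha with ha | ha <;> rcases hb with hb | hb <;> subst ha <;> subst hb <;>
    simp only [map_zero, map_one, zero_add, add_zero, zero_mul, one_mul] at h
  · exact ⟨rfl, rfl⟩
  · exact absurd h (F4_omega_ne0 ω hω)
  · exact absurd h one_ne_zero
  · exact absurd (F4_add_eq_zero h).symm (F4_omega_ne1 ω hω)

lemma F4_repr (a b : ZMod 2) :
    phi4 a * ω + phi4 b * ω^2 = phi4 b + phi4 (a + b) * ω := by
  rw [hω, map_add]; ring

lemma F4_zero_iff (a b : ZMod 2) :
    phi4 a * ω + phi4 b * ω^2 = 0 ↔ a = 0 ∧ b = 0 := by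
  constructor
  · intro h
    rw [F4_repr ω hω] at h
    obtain ⟨h1, h2⟩ := F4_basis ω hω _ _ h
    have : a = 0 ∧ b = 0 := by
      constructor
      · have := h2; rw [h1, add_zero] at this; exact this
      · exact h1
    exact this
  · rintro ⟨h1, h2⟩; rw [h1, h2]; simp

lemma F4_unique {a b c d : ZMod 2}
    (h : phi4 a * ω + phi4 b * ω^2 = phi4 c * ω + phi4 d * ω^2) : a = c ∧ b = d := by
  have h0 : phi4 (a+c) * ω + phi4 (b+d) * ω^2 = 0 := by
    simp only [map_add]
    have e : (phi4 a + phi4 c) * ω + (phi4 b + phi4 d) * ω^2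
        = (phi4 a * ω + phi4 b * ω^2) + (phi4 c * ω + phi4 d * ω^2) := by ring
    rw [e, h, F4_add_self]
  obtain ⟨h1, h2⟩ := (F4_zero_iff ω hω _ _).mp h0
  have key : ∀ u v : ZMod 2, u + v = 0 → u = v := by decide
  exact ⟨key _ _ h1, key _ _ h2⟩

lemma F4_exists (v : F4) : ∃ a b : ZMod 2, v = phi4 a * ω + phi4 b * ω^2 := by
  set f : ZMod 2 × ZMod 2 → F4 := fun p => phi4 p.1 * ω + phi4 p.2 * ω^2 with hf
  have hinj : Function.Injective f := by
    rintro ⟨a, b⟩ ⟨c, d⟩ h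
    obtain ⟨h1, h2⟩ := F4_unique ω hω h
    simp only [Prod.mk.injEq]; exact ⟨h1, h2⟩
  have hsurj : Function.Surjective f := by
    have h1 : Nat.card F4 = 4 := by rw [GaloisField.card 2 2 (by norm_num)]; norm_num
    have h2 : Nat.card (ZMod 2 × ZMod 2) = 4 := by simp [Nat.card_eq_fintype_card]
    exact ((Nat.bijective_iff_injective_and_card f).mpr ⟨hinj, by omega⟩).2
  obtain ⟨⟨a, b⟩, hp⟩ := hsurj v
  exact ⟨a, b, hp.symm⟩

end omega4b


-- pointwise sigma identity, asymmetric version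
lemma sigma_sum_aux (n : ℕ) (j s : Fin n) (hjs : (j:ℕ) ≤ (s:ℕ)) :
    (n:ℚ) - 2*|((j:ℕ):ℚ) - ((s:ℕ):ℚ)| =
    ∑ k : Fin n, (if (j:ℕ) ≤ (k:ℕ) then (1:ℚ) else -1) * (if (s:ℕ) ≤ (k:ℕ) then (1:ℚ) else -1) := by
  have hterm : ∀ k : Fin n,
      (if (j:ℕ) ≤ (k:ℕ) then (1:ℚ) else -1) * (if (s:ℕ) ≤ (k:ℕ) then (1:ℚ) else -1)
      = 1 - 2 * (if (j:ℕ) ≤ (k:ℕ) ∧ (k:ℕ) < (s:ℕ) then (1:ℚ) else 0) := by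
    intro k
    split_ifs <;> first | (exfalso; omega) | norm_num
  rw [Finset.sum_congr rfl (fun k _ => hterm k)]
  rw [Finset.sum_sub_distrib, Finset.sum_const, ← Finset.mul_sum, Finset.sum_boole]
  have hfil : Finset.univ.filter (fun k : Fin n => (j:ℕ) ≤ (k:ℕ) ∧ (k:ℕ) < (s:ℕ))
      = Finset.Ico j s := by
    ext k
    simp only [Finset.mem_filter, Finset.mem_univ, true_and, Finset.mem_Ico, Fin.le_def, Fin.lt_def]
  rw [hfil, Fin.card_Ico]
  have habs : |((j:ℕ):ℚ) - ((s:ℕ):ℚ)| = ((s:ℕ):ℚ) - ((j:ℕ):ℚ) := by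
    rw [abs_sub_comm]
    exact abs_of_nonneg (by push_cast; exact sub_nonneg.mpr (by exact_mod_cast hjs))
  rw [habs]
  simp only [Finset.card_univ, Fintype.card_fin, smul_eq_mul, mul_one]
  push_cast [Nat.cast_sub hjs]
  ring

lemma sigma_sum (n : ℕ) (j s : Fin n) :
    (n:ℚ) - 2*|((j:ℕ):ℚ) - ((s:ℕ):ℚ)| =
    ∑ k : Fin n, (if (j:ℕ) ≤ (k:ℕ) then (1:ℚ) else -1) * (if (s:ℕ) ≤ (k:ℕ) then (1:ℚ) else -1) := by
  rcases le_total ((j:ℕ)) ((s:ℕ)) with h | h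
  · exact sigma_sum_aux n j s h
  · rw [abs_sub_comm]
    rw [sigma_sum_aux n s j h]
    exact Finset.sum_congr rfl (fun k _ => mul_comm _ _)

noncomputable def AQ (n : ℕ) (X : Fin n → ℚ) (k : Fin n) : ℚ :=
  ∑ j ∈ Finset.univ.filter (fun j : Fin n => (j:ℕ) ≤ (k:ℕ)), X j

lemma sigma_lin (n : ℕ) (X : Fin n → ℚ) (k : Fin n) :
    ∑ j : Fin n, (if (j:ℕ) ≤ (k:ℕ) then (1:ℚ) else -1) * X j
    = 2 * AQ n X k - ∑ j, X j := by
  have h : ∀ j : Fin n, (if (j:ℕ) ≤ (k:ℕ) then (1:ℚ) else -1) * X j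
      = 2 * (if (j:ℕ) ≤ (k:ℕ) then X j else 0) - X j := by
    intro j; split_ifs <;> ring
  rw [Finset.sum_congr rfl (fun j _ => h j), Finset.sum_sub_distrib, ← Finset.mul_sum,
    ← Finset.sum_filter]
  rfl

lemma copy_identity (n : ℕ) (X Y : Fin n → ℚ) :
    ∑ j : Fin n, ∑ s : Fin n, (1/4) * ((n:ℚ) - 2*|((j:ℕ):ℚ) - ((s:ℕ):ℚ)|) * X j * Y s
    = (1/4) * ∑ k : Fin n,
        (2 * AQ n X k - ∑ j, X j) * (2 * AQ n Y k - ∑ j, Y j) := by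
  have step1 : ∀ j s : Fin n, (1/4) * ((n:ℚ) - 2*|((j:ℕ):ℚ) - ((s:ℕ):ℚ)|) * X j * Y s
      = ∑ k : Fin n, (1/4) * ((if (j:ℕ) ≤ (k:ℕ) then (1:ℚ) else -1) * X j)
          * ((if (s:ℕ) ≤ (k:ℕ) then (1:ℚ) else -1) * Y s) := by
    intro j s
    rw [show (1/4) * ((n:ℚ) - 2*|((j:ℕ):ℚ) - ((s:ℕ):ℚ)|) * X j * Y s
      = (1/4) * (((n:ℚ) - 2*|((j:ℕ):ℚ) - ((s:ℕ):ℚ)|) * X j * Y s) from by ring,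
      sigma_sum n j s, Finset.sum_mul, Finset.sum_mul, Finset.mul_sum]
    exact Finset.sum_congr rfl (fun k _ => by ring)
  calc ∑ j : Fin n, ∑ s : Fin n, (1/4) * ((n:ℚ) - 2*|((j:ℕ):ℚ) - ((s:ℕ):ℚ)|) * X j * Y s
      = ∑ j : Fin n, ∑ s : Fin n, ∑ k : Fin n,
          (1/4) * ((if (j:ℕ) ≤ (k:ℕ) then (1:ℚ) else -1) * X j)
          * ((if (s:ℕ) ≤ (k:ℕ) then (1:ℚ) else -1) * Y s) := by
        exact Finset.sum_congr rfl (fun j _ => Finset.sum_congr rfl (fun s _ => step1 j s))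
    _ = ∑ k : Fin n, ∑ j : Fin n, ∑ s : Fin n,
          (1/4) * ((if (j:ℕ) ≤ (k:ℕ) then (1:ℚ) else -1) * X j)
          * ((if (s:ℕ) ≤ (k:ℕ) then (1:ℚ) else -1) * Y s) := by
        rw [show (∑ j : Fin n, ∑ s : Fin n, ∑ k : Fin n,
          (1/4) * ((if (j:ℕ) ≤ (k:ℕ) then (1:ℚ) else -1) * X j)
          * ((if (s:ℕ) ≤ (k:ℕ) then (1:ℚ) else -1) * Y s))
          = ∑ j : Fin n, ∑ k : Fin n, ∑ s : Fin n,
          (1/4) * ((if (j:ℕ) ≤ (k:ℕ) then (1:ℚ) else -1) * X j)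
          * ((if (s:ℕ) ≤ (k:ℕ) then (1:ℚ) else -1) * Y s)
          from Finset.sum_congr rfl (fun j _ => Finset.sum_comm)]
        exact Finset.sum_comm
    _ = ∑ k : Fin n, (1/4) * (∑ j : Fin n, (if (j:ℕ) ≤ (k:ℕ) then (1:ℚ) else -1) * X j)
          * (∑ s : Fin n, (if (s:ℕ) ≤ (k:ℕ) then (1:ℚ) else -1) * Y s) := by
        refine Finset.sum_congr rfl (fun k _ => Eq.symm ?_)
        rw [Finset.mul_sum]
        have h1 : ∀ s : Fin n, (1/4 * ∑ j : Fin n, (if (j:ℕ) ≤ (k:ℕ) then (1:ℚ) else -1) * X j)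
            * ((if (s:ℕ) ≤ (k:ℕ) then (1:ℚ) else -1) * Y s)
            = ∑ j : Fin n, (1/4) * ((if (j:ℕ) ≤ (k:ℕ) then (1:ℚ) else -1) * X j)
              * ((if (s:ℕ) ≤ (k:ℕ) then (1:ℚ) else -1) * Y s) := by
          intro s
          rw [Finset.mul_sum, Finset.sum_mul]
        rw [Finset.sum_congr rfl (fun s _ => h1 s)]
        exact Finset.sum_comm
    _ = (1/4) * ∑ k : Fin n,
        (2 * AQ n X k - ∑ j, X j) * (2 * AQ n Y k - ∑ j, Y j) := by
        rw [Finset.mul_sum]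
        refine Finset.sum_congr rfl (fun k _ => ?_)
        rw [sigma_lin, sigma_lin]
        ring

def SInt (n m : ℕ) (x : Fin m → Fin n → ℤ) (i : Fin m) : ℤ := ∑ j, x i j
def AInt (n m : ℕ) (x : Fin m → Fin n → ℤ) (i : Fin m) (k : Fin n) : ℤ :=
  ∑ j ∈ Finset.univ.filter (fun j : Fin n => (j:ℕ) ≤ (k:ℕ)), x i j
def TInt (n m : ℕ) (x : Fin m → Fin n → ℤ) (i : Fin m) : ℤ := ∑ k, AInt n m x i k
def KInt (n m n4 : ℕ) (x y : Fin m → Fin n → ℤ) : ℤ :=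
  ∑ i, (2*((∑ k, AInt n m x i k * AInt n m y i k)
      + (n4:ℤ) * SInt n m x i * SInt n m y i)
    - (SInt n m x i * TInt n m y i + SInt n m y i * TInt n m x i))

lemma expand_copy (n n4 : ℕ) (h4 : n = 4*n4) (A A' : Fin n → ℚ) (S S' : ℚ) :
    2 * ((1/4) * ∑ k, (2*A k - S)*(2*A' k - S'))
    = 2*((∑ k, A k * A' k) + (n4:ℚ)*S*S') - (S*(∑ k, A' k) + S'*(∑ k, A k)) := by
  have h : ∀ k, (2*A k - S)*(2*A' k - S')
      = 4*(A k * A' k) - 2*(S*A' k) - 2*(S'*A k) + S*S' := fun k => by ring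
  rw [Finset.sum_congr rfl (fun k _ => h k), Finset.sum_add_distrib,
    Finset.sum_sub_distrib, Finset.sum_sub_distrib, ← Finset.mul_sum, ← Finset.mul_sum,
    ← Finset.mul_sum, ← Finset.mul_sum, ← Finset.mul_sum,
    Finset.sum_const, Finset.card_univ, Fintype.card_fin]
  rw [nsmul_eq_mul]
  have hq : ((n:ℚ)) = 4 * (n4:ℚ) := by rw [h4]; push_cast; ring
  rw [hq]
  ring

lemma castA (n m : ℕ) (x : Fin m → Fin n → ℤ) (i : Fin m) (k : Fin n) :
    ((AInt n m x i k : ℤ) : ℚ) = AQ n (toQD n m x i) k := by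
  unfold AInt AQ toQD; push_cast; rfl

lemma castS (n m : ℕ) (x : Fin m → Fin n → ℤ) (i : Fin m) :
    ((SInt n m x i : ℤ) : ℚ) = ∑ j, toQD n m x i j := by
  unfold SInt toQD; push_cast; rfl

lemma castT (n m : ℕ) (x : Fin m → Fin n → ℤ) (i : Fin m) :
    ((TInt n m x i : ℤ) : ℚ) = ∑ k, AQ n (toQD n m x i) k := by
  unfold TInt; push_cast [castA]; rfl

lemma LB (n m n4 : ℕ) (h4 : n = 4 * n4) (x y : Fin m → Fin n → ℤ) :
    ((KInt n m n4 x y : ℤ) : ℚ) = 2 * BDev n m (toQD n m x) (toQD n m y) := by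
  unfold BDev
  have hcopy : ∀ i : Fin m,
      ∑ j : Fin n, ∑ s : Fin n,
        (1 / 4) * ((n : ℚ) - 2 * |((j : ℕ) : ℚ) - ((s : ℕ) : ℚ)|) * toQD n m x i j * toQD n m y i s
      = (1/4) * ∑ k : Fin n,
          (2 * AQ n (toQD n m x i) k - ∑ j, toQD n m x i j)
        * (2 * AQ n (toQD n m y i) k - ∑ j, toQD n m y i j) :=
    fun i => copy_identity n (toQD n m x i) (toQD n m y i)
  rw [Finset.sum_congr rfl (fun i _ => hcopy i), Finset.mul_sum]
  have hterm : ∀ i : Fin m,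
      2 * ((1/4) * ∑ k : Fin n,
          (2 * AQ n (toQD n m x i) k - ∑ j, toQD n m x i j)
        * (2 * AQ n (toQD n m y i) k - ∑ j, toQD n m y i j))
      = 2*((∑ k, AQ n (toQD n m x i) k * AQ n (toQD n m y i) k)
          + (n4:ℚ)*(∑ j, toQD n m x i j)*(∑ j, toQD n m y i j))
        - ((∑ j, toQD n m x i j)*(∑ k, AQ n (toQD n m y i) k)
          + (∑ j, toQD n m y i j)*(∑ k, AQ n (toQD n m x i) k)) :=
    fun i => expand_copy n n4 h4 _ _ _ _
  rw [Finset.sum_congr rfl (fun i _ => hterm i)]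
  unfold KInt
  push_cast [castA, castS, castT]
  rfl

lemma parityS (n m : ℕ) (x : Fin m → Fin n → ℤ) (i : Fin m) :
    ((SInt n m x i : ℤ) : ZMod 2) = aD n m x i + bD n m x i := by
  unfold SInt aD bD
  rw [← Finset.sum_filter_add_sum_filter_not Finset.univ (fun j : Fin n => (j:ℕ) % 2 = 0) (x i)]
  have : Finset.univ.filter (fun j : Fin n => ¬ ((j:ℕ) % 2 = 0))
      = Finset.univ.filter (fun j : Fin n => (j:ℕ) % 2 = 1) := by
    apply Finset.filter_congr; intro j _; omega
  rw [this]
  push_cast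
  ring

lemma card_ge (n : ℕ) (j : Fin n) :
    (Finset.univ.filter (fun k : Fin n => (j:ℕ) ≤ (k:ℕ))).card = n - (j:ℕ) := by
  have : Finset.univ.filter (fun k : Fin n => (j:ℕ) ≤ (k:ℕ)) = Finset.Ici j := by
    ext k
    simp only [Finset.mem_filter, Finset.mem_univ, true_and, Finset.mem_Ici, Fin.le_def]
  rw [this, Fin.card_Ici]

lemma parityT (n m : ℕ) (hn2 : 2 ∣ n) (x : Fin m → Fin n → ℤ) (i : Fin m) :
    ((TInt n m x i : ℤ) : ZMod 2) = bD n m x i := by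
  unfold TInt AInt bD
  push_cast
  have step1 : ∀ k : Fin n,
      (∑ j ∈ Finset.univ.filter (fun j : Fin n => (j:ℕ) ≤ (k:ℕ)), ((x i j : ℤ) : ZMod 2))
      = ∑ j : Fin n, if (j:ℕ) ≤ (k:ℕ) then ((x i j : ℤ) : ZMod 2) else 0 :=
    fun k => Finset.sum_filter _ _
  rw [Finset.sum_congr rfl (fun k _ => step1 k), Finset.sum_comm]
  have step2 : ∀ j : Fin n,
      (∑ k : Fin n, if (j:ℕ) ≤ (k:ℕ) then ((x i j : ℤ) : ZMod 2) else 0)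
      = ((j:ℕ) : ZMod 2) * ((x i j : ℤ) : ZMod 2) := by
    intro j
    rw [← Finset.sum_filter, Finset.sum_const, card_ge, nsmul_eq_mul,
      Nat.cast_sub (le_of_lt j.isLt), (ZMod.natCast_eq_zero_iff n 2).mpr hn2]
    exact (by decide : ∀ u v : ZMod 2, (0 - u) * v = u * v) _ _
  rw [Finset.sum_congr rfl (fun j _ => step2 j)]
  rw [← Finset.sum_filter_add_sum_filter_not Finset.univ (fun j : Fin n => (j:ℕ) % 2 = 0)
    (fun j => ((j:ℕ) : ZMod 2) * ((x i j : ℤ) : ZMod 2))]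
  have heven : (∑ j ∈ Finset.univ.filter (fun j : Fin n => (j:ℕ) % 2 = 0),
      ((j:ℕ) : ZMod 2) * ((x i j : ℤ) : ZMod 2)) = 0 := by
    apply Finset.sum_eq_zero
    intro j hj
    rw [Finset.mem_filter] at hj
    have : ((j:ℕ) : ZMod 2) = 0 := by
      rw [← ZMod.natCast_mod (j:ℕ) 2, hj.2, Nat.cast_zero]
    rw [this, zero_mul]
  rw [heven, zero_add]
  have hodd : Finset.univ.filter (fun j : Fin n => ¬ ((j:ℕ) % 2 = 0))
      = Finset.univ.filter (fun j : Fin n => (j:ℕ) % 2 = 1) := by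
    apply Finset.filter_congr; intro j _; omega
  rw [hodd]
  apply Finset.sum_congr rfl
  intro j hj
  rw [Finset.mem_filter] at hj
  have : ((j:ℕ) : ZMod 2) = 1 := by
    rw [← ZMod.natCast_mod (j:ℕ) 2, hj.2, Nat.cast_one]
  rw [this, one_mul]

lemma parityM (n m : ℕ) (x : Fin m → Fin n → ℤ) (i : Fin m) :
    (((∑ k, AInt n m x i k * AInt n m x i k) : ℤ) : ZMod 2) = ((TInt n m x i : ℤ) : ZMod 2) := by
  unfold TInt
  push_cast
  apply Finset.sum_congr rfl
  intro k _
  exact (by decide : ∀ t : ZMod 2, t * t = t) _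

lemma Bint_iff (n m n4 : ℕ) (h4 : n = 4 * n4) (x y : Fin m → Fin n → ℤ) :
    (∃ k : ℤ, (k:ℚ) = BDev n m (toQD n m x) (toQD n m y)) ↔
    ((KInt n m n4 x y : ℤ) : ZMod 2) = 0 := by
  constructor
  · rintro ⟨k, hk⟩
    have h1 : ((KInt n m n4 x y : ℤ) : ℚ) = ((2 * k : ℤ) : ℚ) := by
      rw [LB n m n4 h4 x y, ← hk]; push_cast; ring
    have h2 : KInt n m n4 x y = 2 * k := by exact_mod_cast h1
    rw [h2]; push_cast; ring_nf
    exact (by decide : ∀ t : ZMod 2, t * 2 = 0) _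
  · intro h
    have h2 : (2:ℤ) ∣ KInt n m n4 x y := by
      exact_mod_cast (ZMod.intCast_zmod_eq_zero_iff_dvd _ 2).mp h
    obtain ⟨t, ht⟩ := h2
    refine ⟨t, ?_⟩
    have h1 := LB n m n4 h4 x y
    rw [ht] at h1
    push_cast at h1
    linarith

def EIntD (n m n4 : ℕ) (x : Fin m → Fin n → ℤ) : ℤ :=
  ∑ i, ((∑ k, AInt n m x i k * AInt n m x i k)
      + (n4:ℤ) * SInt n m x i * SInt n m x i - SInt n m x i * TInt n m x i)

lemma KInt_diag (n m n4 : ℕ) (x : Fin m → Fin n → ℤ) :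
    KInt n m n4 x x = 2 * EIntD n m n4 x := by
  unfold KInt EIntD
  rw [Finset.mul_sum]
  exact Finset.sum_congr rfl (fun i _ => by ring)

lemma LEq (n m n4 : ℕ) (h4 : n = 4 * n4) (x : Fin m → Fin n → ℤ) :
    ((EIntD n m n4 x : ℤ) : ℚ) = BDev n m (toQD n m x) (toQD n m x) := by
  have h1 := LB n m n4 h4 x x
  rw [KInt_diag] at h1
  push_cast at h1
  linarith

lemma Beven_iff (n m n4 : ℕ) (h4 : n = 4 * n4) (x : Fin m → Fin n → ℤ) :
    (∃ k : ℤ, ((2 * k : ℤ) : ℚ) = BDev n m (toQD n m x) (toQD n m x)) ↔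
    ((EIntD n m n4 x : ℤ) : ZMod 2) = 0 := by
  constructor
  · rintro ⟨k, hk⟩
    have h1 : ((EIntD n m n4 x : ℤ) : ℚ) = ((2 * k : ℤ) : ℚ) := by
      rw [LEq n m n4 h4 x, ← hk]
    have h2 : EIntD n m n4 x = 2 * k := by exact_mod_cast h1
    rw [h2]; push_cast; ring_nf
    exact (by decide : ∀ t : ZMod 2, t * 2 = 0) _
  · intro h
    have h2 : (2:ℤ) ∣ EIntD n m n4 x := by
      exact_mod_cast (ZMod.intCast_zmod_eq_zero_iff_dvd _ 2).mp h
    obtain ⟨t, ht⟩ := h2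
    refine ⟨t, ?_⟩
    rw [← LEq n m n4 h4 x, ht]

lemma Kmod (n m n4 : ℕ) (hn2 : 2 ∣ n) (x y : Fin m → Fin n → ℤ) :
    ((KInt n m n4 x y : ℤ) : ZMod 2)
    = ∑ i, (aD n m x i * bD n m y i + aD n m y i * bD n m x i) := by
  unfold KInt
  push_cast
  apply Finset.sum_congr rfl
  intro i _
  rw [parityS, parityS, parityT n m hn2, parityT n m hn2]
  exact (by decide : ∀ u w a b c d : ZMod 2,
    2*(u + w*(a+b)*(c+d)) - ((a+b)*d + (c+d)*b) = a*d + c*b) _ _ _ _ _ _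

lemma parityM' (n m : ℕ) (hn2 : 2 ∣ n) (x : Fin m → Fin n → ℤ) (i : Fin m) :
    (∑ k : Fin n, ((AInt n m x i k : ℤ) : ZMod 2) * ((AInt n m x i k : ℤ) : ZMod 2))
    = bD n m x i := by
  have h1 : (∑ k : Fin n, ((AInt n m x i k : ℤ) : ZMod 2) * ((AInt n m x i k : ℤ) : ZMod 2))
      = ((TInt n m x i : ℤ) : ZMod 2) := by
    have h2 : ((TInt n m x i : ℤ) : ZMod 2) = ∑ k : Fin n, ((AInt n m x i k : ℤ) : ZMod 2) := by
      unfold TInt; push_cast; rfl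
    rw [h2]
    exact Finset.sum_congr rfl (fun k _ => (by decide : ∀ t : ZMod 2, t * t = t) _)
  rw [h1, parityT n m hn2]

lemma Emod (n m n4 : ℕ) (hn2 : 2 ∣ n) (hodd : (n4 : ZMod 2) = 1) (x : Fin m → Fin n → ℤ) :
    ((EIntD n m n4 x : ℤ) : ZMod 2)
    = ∑ i, (aD n m x i + bD n m x i + aD n m x i * bD n m x i) := by
  unfold EIntD
  push_cast
  apply Finset.sum_congr rfl
  intro i _
  rw [parityM' n m hn2, parityS, parityT n m hn2, hodd]
  exact (by decide : ∀ a b : ZMod 2,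
    b + 1*(a+b)*(a+b) - (a+b)*b = a + b + a*b) _ _



-- ===== killer vectors =====

def KV (n m : ℕ) (i0 : Fin m) (c : Fin n → ℤ) : Fin m → Fin n → ℤ :=
  fun i j => if i = i0 then c j else 0

def cvec (n : ℕ) (s p q : Fin n) (e : ℤ) : Fin n → ℤ :=
  fun j => (if j = s then 2 else 0) + (if j = p then -1 else 0) + (if j = q then e else 0)

lemma BDev_KV (n m : ℕ) (z : Fin m → Fin n → ℚ) (i0 : Fin m) (c : Fin n → ℤ) :
    BDev n m z (toQD n m (KV n m i0 c))
    = ∑ t : Fin n, (∑ j : Fin n,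
        (1/4) * ((n:ℚ) - 2*|((j:ℕ):ℚ) - ((t:ℕ):ℚ)|) * z i0 j) * (c t : ℚ) := by
  unfold BDev toQD KV
  rw [Finset.sum_eq_single i0]
  · simp only [eq_self_iff_true, if_true]
    rw [Finset.sum_comm]
    refine Finset.sum_congr rfl fun t _ => ?_
    rw [Finset.sum_mul]
  · intro i _ hne
    apply Finset.sum_eq_zero; intro j _
    apply Finset.sum_eq_zero; intro t _
    rw [if_neg hne]
    simp
  · intro h; exact absurd (Finset.mem_univ i0) h

lemma cvec_filter_sum (n : ℕ) (s p q : Fin n) (e : ℤ) (he : e = 1 ∨ e = -1)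
    (hpq : (p:ℕ) % 2 = (q:ℕ) % 2) (r : ℕ) :
    ((∑ j ∈ Finset.univ.filter (fun j : Fin n => (j:ℕ) % 2 = r), cvec n s p q e j : ℤ)
      : ZMod 2) = 0 := by
  unfold cvec
  rw [Finset.sum_add_distrib, Finset.sum_add_distrib, Finset.sum_ite_eq',
    Finset.sum_ite_eq', Finset.sum_ite_eq']
  simp only [Finset.mem_filter, Finset.mem_univ, true_and]
  by_cases hp : (p:ℕ) % 2 = r
  · have hq : (q:ℕ) % 2 = r := by omega
    simp only [hp, hq, if_true]
    rcases he with he | he <;> subst he <;> by_cases hs : (s:ℕ) % 2 = r <;>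
      simp only [hs, if_true, if_false] <;> push_cast <;> decide
  · have hq : ¬ ((q:ℕ) % 2 = r) := by omega
    simp only [hp, hq, if_false]
    by_cases hs : (s:ℕ) % 2 = r <;>
      simp only [hs, if_true, if_false] <;> push_cast <;> decide

lemma aD_KV (n m : ℕ) (i0 : Fin m) (c : Fin n → ℤ) (i : Fin m) :
    aD n m (KV n m i0 c) i
    = if i = i0 then ((∑ j ∈ Finset.univ.filter (fun j : Fin n => (j:ℕ) % 2 = 0), c j : ℤ) : ZMod 2) else 0 := by
  unfold aD KV
  by_cases hi : i = i0
  · subst hi; simp only [eq_self_iff_true, if_true]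
  · simp only [hi, if_false, Finset.sum_const_zero, Int.cast_zero]

lemma bD_KV (n m : ℕ) (i0 : Fin m) (c : Fin n → ℤ) (i : Fin m) :
    bD n m (KV n m i0 c) i
    = if i = i0 then ((∑ j ∈ Finset.univ.filter (fun j : Fin n => (j:ℕ) % 2 = 1), c j : ℤ) : ZMod 2) else 0 := by
  unfold bD KV
  by_cases hi : i = i0
  · subst hi; simp only [eq_self_iff_true, if_true]
  · simp only [hi, if_false, Finset.sum_const_zero, Int.cast_zero]

lemma coefpt (n : ℕ) (e : ℤ) (j s p q : Fin n)
    (hkey : 2*((n:ℤ) - 2*((((j:ℕ):ℤ) - ((s:ℕ):ℤ)).natAbs : ℤ))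
        - ((n:ℤ) - 2*((((j:ℕ):ℤ) - ((p:ℕ):ℤ)).natAbs : ℤ))
        + e*((n:ℤ) - 2*((((j:ℕ):ℤ) - ((q:ℕ):ℤ)).natAbs : ℤ))
        = (if j = s then 4 else 0)) :
    ((1/4) * ((n:ℚ) - 2*|((j:ℕ):ℚ) - ((s:ℕ):ℚ)|)) * 2
      + ((1/4) * ((n:ℚ) - 2*|((j:ℕ):ℚ) - ((p:ℕ):ℚ)|)) * (-1)
      + ((1/4) * ((n:ℚ) - 2*|((j:ℕ):ℚ) - ((q:ℕ):ℚ)|)) * (e:ℚ)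
      = (if j = s then 1 else 0) := by
  have hc := congrArg (fun t : ℤ => (t:ℚ)) hkey
  push_cast [Nat.cast_natAbs] at hc
  by_cases hjs : j = s
  · simp only [hjs, if_true, eq_self_iff_true] at hc ⊢
    push_cast at hc ⊢
    linarith
  · simp only [hjs, if_false] at hc ⊢
    push_cast at hc ⊢
    linarith

lemma killer (n m : ℕ) (hn : 4 ≤ n) (hn2 : 2 ∣ n) (z : Fin m → Fin n → ℚ)
    (i0 : Fin m) (s : Fin n) :
    ∃ y : Fin m → Fin n → ℤ,
      (∀ i, aD n m y i = 0 ∧ bD n m y i = 0) ∧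
      BDev n m z (toQD n m y) = z i0 s := by
  -- choose p q e per case
  obtain ⟨p, q, e, he, hpq, hkey⟩ :
      ∃ (p q : Fin n) (e : ℤ), (e = 1 ∨ e = -1) ∧ (p:ℕ) % 2 = (q:ℕ) % 2 ∧
        ∀ j : Fin n, 2*((n:ℤ) - 2*((((j:ℕ):ℤ) - ((s:ℕ):ℤ)).natAbs : ℤ))
          - ((n:ℤ) - 2*((((j:ℕ):ℤ) - ((p:ℕ):ℤ)).natAbs : ℤ))
          + e*((n:ℤ) - 2*((((j:ℕ):ℤ) - ((q:ℕ):ℤ)).natAbs : ℤ))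
          = (if j = s then 4 else 0) := by
    obtain ⟨n2, hn2'⟩ := hn2
    by_cases hs0 : (s:ℕ) = 0
    · refine ⟨⟨1, by omega⟩, ⟨n-1, by omega⟩, 1, Or.inl rfl, by simp only [Fin.val_mk]; omega, ?_⟩
      intro j
      have hj := j.isLt
      by_cases hjs : j = s
      · subst hjs; simp only [if_true, eq_self_iff_true, Fin.val_mk]; omega
      · rw [if_neg hjs]
        have hne : (j:ℕ) ≠ (s:ℕ) := fun hh => hjs (Fin.ext hh)
        simp only [Fin.val_mk]; omega
    · by_cases hsl : (s:ℕ) = n-1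
      · refine ⟨⟨n-2, by omega⟩, ⟨0, by omega⟩, 1, Or.inl rfl, by simp only [Fin.val_mk]; omega, ?_⟩
        intro j
        have hj := j.isLt
        by_cases hjs : j = s
        · subst hjs; simp only [if_true, eq_self_iff_true, Fin.val_mk]; omega
        · rw [if_neg hjs]
          have hne : (j:ℕ) ≠ (s:ℕ) := fun hh => hjs (Fin.ext hh)
          simp only [Fin.val_mk]; omega
      · refine ⟨⟨(s:ℕ)-1, by omega⟩, ⟨(s:ℕ)+1, by omega⟩, -1, Or.inr rfl, by simp only [Fin.val_mk]; omega, ?_⟩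
        intro j
        have hj := j.isLt
        have hs := s.isLt
        by_cases hjs : j = s
        · subst hjs; simp only [if_true, eq_self_iff_true, Fin.val_mk]; omega
        · rw [if_neg hjs]
          have hne : (j:ℕ) ≠ (s:ℕ) := fun hh => hjs (Fin.ext hh)
          simp only [Fin.val_mk]; omega
  refine ⟨KV n m i0 (cvec n s p q e), ?_, ?_⟩
  · intro i
    constructor
    · rw [aD_KV]
      by_cases hi : i = i0
      · rw [if_pos hi]; exact cvec_filter_sum n s p q e he hpq 0
      · rw [if_neg hi]
    · rw [bD_KV]
      by_cases hi : i = i0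
      · rw [if_pos hi]; exact cvec_filter_sum n s p q e he hpq 1
      · rw [if_neg hi]
  · rw [BDev_KV]
    unfold cvec
    have expand : ∀ t : Fin n,
        (∑ j : Fin n, (1/4) * ((n:ℚ) - 2*|((j:ℕ):ℚ) - ((t:ℕ):ℚ)|) * z i0 j)
          * (((if t = s then (2:ℤ) else 0) + (if t = p then -1 else 0) + (if t = q then e else 0) : ℤ) : ℚ)
        = (if t = s then (∑ j : Fin n, (1/4) * ((n:ℚ) - 2*|((j:ℕ):ℚ) - ((t:ℕ):ℚ)|) * z i0 j) * 2 else 0)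
          + (if t = p then (∑ j : Fin n, (1/4) * ((n:ℚ) - 2*|((j:ℕ):ℚ) - ((t:ℕ):ℚ)|) * z i0 j) * (-1) else 0)
          + (if t = q then (∑ j : Fin n, (1/4) * ((n:ℚ) - 2*|((j:ℕ):ℚ) - ((t:ℕ):ℚ)|) * z i0 j) * (e:ℚ) else 0) := by
      intro t
      push_cast
      split_ifs <;> ring
    rw [Finset.sum_congr rfl (fun t _ => expand t), Finset.sum_add_distrib,
      Finset.sum_add_distrib, Finset.sum_ite_eq', Finset.sum_ite_eq', Finset.sum_ite_eq']
    simp only [Finset.mem_univ, if_true]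
    -- now : U s * 2 + U p * (-1) + U q * e = z i0 s
    rw [Finset.sum_mul, Finset.sum_mul, Finset.sum_mul, ← Finset.sum_add_distrib,
      ← Finset.sum_add_distrib]
    have hpt : ∀ j : Fin n,
        ((1/4) * ((n:ℚ) - 2*|((j:ℕ):ℚ) - ((s:ℕ):ℚ)|) * z i0 j) * 2
        + ((1/4) * ((n:ℚ) - 2*|((j:ℕ):ℚ) - ((p:ℕ):ℚ)|) * z i0 j) * (-1)
        + ((1/4) * ((n:ℚ) - 2*|((j:ℕ):ℚ) - ((q:ℕ):ℚ)|) * z i0 j) * (e:ℚ)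
        = (if j = s then z i0 j else 0) := by
      intro j
      have h1 := coefpt n e j s p q (hkey j)
      have h2 : (((1/4) * ((n:ℚ) - 2*|((j:ℕ):ℚ) - ((s:ℕ):ℚ)|)) * 2
        + ((1/4) * ((n:ℚ) - 2*|((j:ℕ):ℚ) - ((p:ℕ):ℚ)|)) * (-1)
        + ((1/4) * ((n:ℚ) - 2*|((j:ℕ):ℚ) - ((q:ℕ):ℚ)|)) * (e:ℚ)) * z i0 j
        = (if j = s then (1:ℚ) else 0) * z i0 j := by rw [h1]
      rw [show (if j = s then z i0 j else 0) = (if j = s then (1:ℚ) else 0) * z i0 j from by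
        split_ifs <;> ring, ← h2]
      ring
    rw [Finset.sum_congr rfl (fun j _ => hpt j), Finset.sum_ite_eq' Finset.univ s (z i0)]
    simp



-- ===== lifting =====

lemma valcast : ∀ a : ZMod 2, (((a.val : ℤ)) : ZMod 2) = a := by decide

lemma lift_ab (n m : ℕ) (hn : 4 ≤ n) (a b : Fin m → ZMod 2) :
    ∃ x : Fin m → Fin n → ℤ, ∀ i, aD n m x i = a i ∧ bD n m x i = b i := by
  refine ⟨fun i j => if (j:ℕ) = 0 then ((a i).val : ℤ)
    else if (j:ℕ) = 1 then ((b i).val : ℤ) else 0, fun i => ⟨?_, ?_⟩⟩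
  · unfold aD
    rw [Finset.sum_eq_single (⟨0, by omega⟩ : Fin n)]
    · simp only [Fin.val_mk]
      rw [if_pos trivial]
      exact valcast _
    · intro j hj hne
      rw [Finset.mem_filter] at hj
      have h0 : (j:ℕ) ≠ 0 := fun hh => hne (Fin.ext (by simpa using hh))
      have h1 : (j:ℕ) ≠ 1 := by
        have := hj.2; omega
      simp only [h0, h1, if_false]
    · intro hmem
      exact absurd (Finset.mem_filter.mpr ⟨Finset.mem_univ _, by simp⟩) hmem
  · unfold bD
    rw [Finset.sum_eq_single (⟨1, by omega⟩ : Fin n)]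
    · simp only [Fin.val_mk]
      rw [if_neg (by omega), if_pos trivial]
      exact valcast _
    · intro j hj hne
      rw [Finset.mem_filter] at hj
      have h1 : (j:ℕ) ≠ 1 := fun hh => hne (Fin.ext (by simpa using hh))
      have h0 : (j:ℕ) ≠ 0 := by
        have := hj.2; omega
      simp only [h0, h1, if_false]
    · intro hmem
      exact absurd (Finset.mem_filter.mpr ⟨Finset.mem_univ _, by simp⟩) hmem

lemma rho_eq (ω : F4) (n m : ℕ) (x : Fin m → Fin n → ℤ) (i : Fin m) :
    rhoF4 ω n m x i = phi4 (aD n m x i) * ω + phi4 (bD n m x i) * ω ^ 2 := rfl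

lemma toQD_inj (n m : ℕ) : Function.Injective (toQD n m) := by
  intro x y h
  funext i j
  have h2 : ((x i j : ℤ) : ℚ) = ((y i j : ℤ) : ℚ) := congrFun (congrFun h i) j
  exact_mod_cast h2



-- ===== weight =====

open scoped Classical in
lemma wtH_card (m : ℕ) (v : Fin m → F4) :
    wtHF m v = (Finset.univ.filter (fun i => ¬ (v i = 0))).card := by
  classical
  have e0 : N0F m v = (Finset.univ.filter (fun i => v i = 0)).card := by
    unfold N0F; congr 1
  have e2 : N2F m v = (Finset.univ.filter (fun i => v i = 1)).card := by
    unfold N2F; congr 1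
  have h1 : (Finset.univ.filter (fun i => v i = 0)).card
      + (Finset.univ.filter (fun i => ¬ (v i = 0))).card = m := by
    rw [Finset.card_filter_add_card_filter_not]
    simp
  have h2 : (Finset.univ.filter (fun i => v i = 1)).card
      ≤ (Finset.univ.filter (fun i => ¬ (v i = 0))).card := by
    apply Finset.card_le_card
    intro i hi
    rw [Finset.mem_filter] at hi ⊢
    exact ⟨hi.1, by rw [hi.2]; exact one_ne_zero⟩
  unfold wtHF N1F
  rw [e0, e2]
  omega

open scoped Classical in
lemma wt_char (ω : F4) (hω : ω^2 = ω + 1) (m : ℕ) (v : Fin m → F4)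
    (a b : Fin m → ZMod 2) (hv : ∀ i, v i = phi4 (a i) * ω + phi4 (b i) * ω^2) :
    (2 ∣ wtHF m v) ↔ (∑ i, (a i + b i + a i * b i)) = 0 := by
  classical
  have hzero : ∀ i, v i = 0 ↔ (a i = 0 ∧ b i = 0) := fun i => by
    rw [hv i]; exact F4_zero_iff ω hω _ _
  rw [wtH_card m v]
  have hcast : (((Finset.univ.filter (fun i => ¬ (v i = 0))).card : ℕ) : ZMod 2)
      = ∑ i, (a i + b i + a i * b i) := by
    rw [Finset.card_filter]
    push_cast
    apply Finset.sum_congr rfl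
    intro i _
    by_cases h : v i = 0
    · obtain ⟨h1, h2⟩ := (hzero i).mp h
      simp [h, h1, h2]
    · rw [if_pos h]
      have hne : ¬ (a i = 0 ∧ b i = 0) := fun hc => h ((hzero i).mpr hc)
      revert hne
      generalize a i = u
      generalize b i = t
      revert u t
      decide
  constructor
  · intro h
    rw [← hcast]
    exact (ZMod.natCast_eq_zero_iff _ 2).mpr h
  · intro h
    rw [← hcast] at h
    exact (ZMod.natCast_eq_zero_iff _ 2).mp h


theorem stmt14 (n m : ℕ) (hn : 4 ≤ n) (hn4 : 4 ∣ n) (hn8 : ¬ (8 ∣ n))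
    (hm : 0 < m) (ω : F4) (hω : ω ^ 2 = ω + 1)
    (C : Submodule F4 (Fin m → F4)) :
    (IsIntegralF4 ω n m (C : Set _) ↔
        (C : Set _) ⊆ dualCodeF4 m (conjF4 m '' (C : Set _))) ∧
    (IsUnimodularF4 ω n m (C : Set _) ↔
        IsHermitianSelfDualF4 m (C : Set _)) ∧
    (IsEvenLatF4 ω n m (C : Set _) ↔ ∀ w ∈ C, 2 ∣ wtHF m w) ∧
    ((IsEvenLatF4 ω n m (C : Set _) ∧ IsUnimodularF4 ω n m (C : Set _)) ↔
        IsHermitianSelfDualF4 m (C : Set _)) := by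
  obtain ⟨n4, h4⟩ : ∃ n4, n = 4 * n4 := hn4
  have hn2 : 2 ∣ n := ⟨2 * n4, by omega⟩
  have hodd : (n4 : ZMod 2) = 1 := by
    have h1 : n4 % 2 = 1 := by omega
    rw [← ZMod.natCast_mod n4 2, h1, Nat.cast_one]
  -- decomposition of F4 elements
  choose dA dB hdec using fun v : F4 => F4_exists ω hω v
  have hdAB : ∀ (x : Fin m → Fin n → ℤ) (i : Fin m),
      dA (rhoF4 ω n m x i) = aD n m x i ∧ dB (rhoF4 ω n m x i) = bD n m x i := by
    intro x i
    exact F4_unique ω hω ((hdec _).symm.trans (rho_eq ω n m x i))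
  have hlift : ∀ v : Fin m → F4, ∃ x : Fin m → Fin n → ℤ, rhoF4 ω n m x = v := by
    intro v
    obtain ⟨x, hx⟩ := lift_ab n m hn (fun i => dA (v i)) (fun i => dB (v i))
    refine ⟨x, funext fun i => ?_⟩
    rw [rho_eq, (hx i).1, (hx i).2, ← hdec (v i)]
  have hscale : ∀ u : F4, dA (ω * u) = dB u ∧ dB (ω * u) = dA u + dB u := by
    intro u
    apply F4_unique ω hω
    rw [← hdec (ω * u)]
    calc ω * u = ω * (phi4 (dA u) * ω + phi4 (dB u) * ω^2) := by rw [← hdec u]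
      _ = phi4 (dB u) * ω + phi4 (dA u + dB u) * ω^2 := F4_scale ω hω _ _
  set Qc : (Fin m → F4) → (Fin m → F4) → ZMod 2 :=
    fun v w => ∑ i, (dA (v i) * dB (w i) + dA (w i) * dB (v i)) with hQcdef
  have hQrho : ∀ x y : Fin m → Fin n → ℤ,
      Qc (rhoF4 ω n m x) (rhoF4 ω n m y)
        = ∑ i, (aD n m x i * bD n m y i + aD n m y i * bD n m x i) := by
    intro x y
    apply Finset.sum_congr rfl
    intro i _
    rw [(hdAB x i).1, (hdAB x i).2, (hdAB y i).1, (hdAB y i).2]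
  have hBint : ∀ x y : Fin m → Fin n → ℤ,
      (∃ k : ℤ, (k:ℚ) = BDev n m (toQD n m x) (toQD n m y)) ↔
      Qc (rhoF4 ω n m x) (rhoF4 ω n m y) = 0 := by
    intro x y
    rw [Bint_iff n m n4 h4 x y, Kmod n m n4 hn2 x y, hQrho]
  -- Hermitian sum
  have hherm : ∀ v w : Fin m → F4,
      (∑ i, v i * (w i)^2) = phi4 (Qc v (fun i => ω * w i)) + phi4 (Qc v w) * ω := by
    intro v w
    have hpt : ∀ i : Fin m, v i * (w i)^2
        = phi4 (dA (v i) * dB ((fun i => ω * w i) i) + dA ((fun i => ω * w i) i) * dB (v i))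
          + phi4 (dA (v i) * dB (w i) + dA (w i) * dB (v i)) * ω := by
      intro i
      simp only
      rw [(hscale (w i)).1, (hscale (w i)).2]
      calc v i * (w i)^2
          = (phi4 (dA (v i)) * ω + phi4 (dB (v i)) * ω^2)
            * (phi4 (dA (w i)) * ω + phi4 (dB (w i)) * ω^2)^2 := by
            rw [← hdec (v i), ← hdec (w i)]
        _ = phi4 (dA (v i) * (dA (w i) + dB (w i)) + dB (v i) * dB (w i))
            + phi4 (dA (v i) * dB (w i) + dB (v i) * dA (w i)) * ω := F4_herm ω hω _ _ _ _
        _ = phi4 (dA (v i) * (dA (w i) + dB (w i)) + dB (w i) * dB (v i))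
            + phi4 (dA (v i) * dB (w i) + dA (w i) * dB (v i)) * ω := by
            rw [show dA (v i) * (dA (w i) + dB (w i)) + dB (v i) * dB (w i)
              = dA (v i) * (dA (w i) + dB (w i)) + dB (w i) * dB (v i) from by ring,
              show dA (v i) * dB (w i) + dB (v i) * dA (w i)
              = dA (v i) * dB (w i) + dA (w i) * dB (v i) from by ring]
    rw [Finset.sum_congr rfl (fun i _ => hpt i), Finset.sum_add_distrib, ← map_sum,
      ← Finset.sum_mul, ← map_sum]
  have hPzero : ∀ v w : Fin m → F4,
      (∑ i, v i * (w i)^2) = 0 ↔ (Qc v (fun i => ω * w i) = 0 ∧ Qc v w = 0) := by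
    intro v w
    rw [hherm v w]
    constructor
    · exact fun h => F4_basis ω hω _ _ h
    · rintro ⟨h1, h2⟩; rw [h1, h2]; simp
  have hsmul : ∀ w : Fin m → F4, (fun i => ω * w i) = ω • w := fun w => rfl
  -- dual code membership
  have hD : ∀ w : Fin m → F4, (w ∈ dualCodeF4 m (conjF4 m '' (C : Set _))) ↔
      ∀ v ∈ C, (Qc w (fun i => ω * v i) = 0 ∧ Qc w v = 0) := by
    intro w
    constructor
    · intro h v hv
      exact (hPzero w v).mp (h (conjF4 m v) ⟨v, hv, rfl⟩)
    · rintro h u ⟨v, hv, rfl⟩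
      exact (hPzero w v).mpr (h v hv)
  -- integrality characterization
  have hIntChar : IsIntegralF4 ω n m (C : Set _) ↔ ∀ v ∈ C, ∀ w ∈ C, Qc v w = 0 := by
    constructor
    · intro h v hv w hw
      obtain ⟨x, hx⟩ := hlift v
      obtain ⟨y, hy⟩ := hlift w
      have hmx : x ∈ GammaF4 ω n m (C : Set _) := by
        show rhoF4 ω n m x ∈ (C : Set _); rw [hx]; exact hv
      have hmy : y ∈ GammaF4 ω n m (C : Set _) := by
        show rhoF4 ω n m y ∈ (C : Set _); rw [hy]; exact hw
      have := (hBint x y).mp (h x hmx y hmy)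
      rwa [hx, hy] at this
    · intro h x hx y hy
      exact (hBint x y).mpr (h _ hx _ hy)
  -- weight characterization via dec
  have hwt : ∀ v : Fin m → F4,
      (2 ∣ wtHF m v) ↔ (∑ i, (dA (v i) + dB (v i) + dA (v i) * dB (v i))) = 0 := by
    intro v
    exact wt_char ω hω m v (fun i => dA (v i)) (fun i => dB (v i)) (fun i => hdec (v i))
  -- evenness characterization
  have hEvenChar : ∀ x : Fin m → Fin n → ℤ,
      (∃ k : ℤ, ((2 * k : ℤ) : ℚ) = BDev n m (toQD n m x) (toQD n m x)) ↔
      (∑ i, (dA (rhoF4 ω n m x i) + dB (rhoF4 ω n m x i)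
        + dA (rhoF4 ω n m x i) * dB (rhoF4 ω n m x i))) = 0 := by
    intro x
    rw [Beven_iff n m n4 h4 x, Emod n m n4 hn2 hodd x]
    constructor <;> intro h <;> [skip; skip] <;>
    · rw [show (∑ i, (dA (rhoF4 ω n m x i) + dB (rhoF4 ω n m x i)
        + dA (rhoF4 ω n m x i) * dB (rhoF4 ω n m x i)))
        = ∑ i, (aD n m x i + bD n m x i + aD n m x i * bD n m x i) from
        Finset.sum_congr rfl (fun i _ => by
          rw [(hdAB x i).1, (hdAB x i).2])] at *
      assumption
  -- part 1
  have part1 : IsIntegralF4 ω n m (C : Set _) ↔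
      (C : Set _) ⊆ dualCodeF4 m (conjF4 m '' (C : Set _)) := by
    constructor
    · intro h v hv
      have hq := hIntChar.mp h
      rw [hD]
      intro w hw
      refine ⟨?_, hq v hv w hw⟩
      rw [hsmul]
      exact hq v hv (ω • w) (C.smul_mem ω hw)
    · intro h
      apply hIntChar.mpr
      intro v hv w hw
      exact ((hD v).mp (h hv) w hw).2
  -- part 2
  have part2 : IsUnimodularF4 ω n m (C : Set _) ↔ IsHermitianSelfDualF4 m (C : Set _) := by
    constructor
    · intro h
      apply Set.Subset.antisymm
      · intro v hv
        rw [hD]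
        intro w hw
        obtain ⟨x, hx⟩ := hlift v
        have hmx : toQD n m x ∈ toQD n m '' GammaF4 ω n m (C : Set _) :=
          ⟨x, by show rhoF4 ω n m x ∈ (C : Set _); rw [hx]; exact hv, rfl⟩
        rw [← h] at hmx
        constructor
        · obtain ⟨y, hy⟩ := hlift (ω • w)
          have hmy : y ∈ GammaF4 ω n m (C : Set _) := by
            show rhoF4 ω n m y ∈ (C : Set _); rw [hy]; exact C.smul_mem ω hw
          have := (hBint x y).mp (hmx y hmy)
          rwa [hx, hy, ← hsmul] at this
        · obtain ⟨y, hy⟩ := hlift w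
          have hmy : y ∈ GammaF4 ω n m (C : Set _) := by
            show rhoF4 ω n m y ∈ (C : Set _); rw [hy]; exact hw
          have := (hBint x y).mp (hmx y hmy)
          rwa [hx, hy] at this
      · intro w hw
        obtain ⟨x, hx⟩ := hlift w
        have hdualmem : toQD n m x ∈ dualLatticeF4 ω n m (C : Set _) := by
          intro y hy
          apply (hBint x y).mpr
          rw [hx]
          exact ((hD w).mp hw (rhoF4 ω n m y) hy).2
        rw [h] at hdualmem
        obtain ⟨x', hx', heq⟩ := hdualmem
        have : x' = x := toQD_inj n m heq
        rw [← hx, ← this]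
        exact hx'
    · intro hsd
      apply Set.Subset.antisymm
      · intro z hz
        have hzint : ∀ (i0 : Fin m) (s : Fin n), ∃ k : ℤ, (k:ℚ) = z i0 s := by
          intro i0 s
          obtain ⟨y, hy0, hyB⟩ := killer n m hn hn2 z i0 s
          have hyΓ : y ∈ GammaF4 ω n m (C : Set _) := by
            show rhoF4 ω n m y ∈ (C : Set _)
            have : rhoF4 ω n m y = 0 := by
              funext i
              rw [rho_eq, (hy0 i).1, (hy0 i).2]
              simp
            rw [this]
            exact C.zero_mem
          obtain ⟨k, hk⟩ := hz y hyΓ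
          exact ⟨k, hk.trans hyB⟩
        choose xz hxz using hzint
        have hzeq : toQD n m xz = z := by
          funext i j
          exact hxz i j
        have hxzΓ : xz ∈ GammaF4 ω n m (C : Set _) := by
          show rhoF4 ω n m xz ∈ (C : Set _)
          rw [hsd, hD]
          intro v hv
          constructor
          · obtain ⟨y, hy⟩ := hlift (ω • v)
            have hmy : y ∈ GammaF4 ω n m (C : Set _) := by
              show rhoF4 ω n m y ∈ (C : Set _); rw [hy]; exact C.smul_mem ω hv
            have hb : ∃ k : ℤ, (k:ℚ) = BDev n m (toQD n m xz) (toQD n m y) := by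
              rw [hzeq]; exact hz y hmy
            have := (hBint xz y).mp hb
            rwa [hy, ← hsmul] at this
          · obtain ⟨y, hy⟩ := hlift v
            have hmy : y ∈ GammaF4 ω n m (C : Set _) := by
              show rhoF4 ω n m y ∈ (C : Set _); rw [hy]; exact hv
            have hb : ∃ k : ℤ, (k:ℚ) = BDev n m (toQD n m xz) (toQD n m y) := by
              rw [hzeq]; exact hz y hmy
            have := (hBint xz y).mp hb
            rwa [hy] at this
        exact ⟨xz, hxzΓ, hzeq⟩
      · rintro z ⟨x, hxΓ, rfl⟩
        intro y hyΓ
        apply (hBint x y).mpr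
        have hx : rhoF4 ω n m x ∈ (C : Set _) := hxΓ
        rw [hsd] at hx
        exact ((hD _).mp hx (rhoF4 ω n m y) hyΓ).2
  -- part 3
  have part3 : IsEvenLatF4 ω n m (C : Set _) ↔ ∀ w ∈ C, 2 ∣ wtHF m w := by
    constructor
    · rintro ⟨hI, hE⟩ w hw
      obtain ⟨x, hx⟩ := hlift w
      have hmx : x ∈ GammaF4 ω n m (C : Set _) := by
        show rhoF4 ω n m x ∈ (C : Set _); rw [hx]; exact hw
      have := (hEvenChar x).mp (hE x hmx)
      rw [hx] at this
      exact (hwt w).mpr this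
    · intro hw
      have hind : ∀ u ∈ C, (∑ i, (dA (u i) + dB (u i) + dA (u i) * dB (u i))) = 0 :=
        fun u hu => (hwt u).mp (hw u hu)
      constructor
      · apply hIntChar.mpr
        intro v hv w' hw'
        have hvw : v + w' ∈ C := C.add_mem hv hw'
        have hdadd : ∀ i, dA ((v + w') i) = dA (v i) + dA (w' i)
            ∧ dB ((v + w') i) = dB (v i) + dB (w' i) := by
          intro i
          apply F4_unique ω hω
          rw [← hdec ((v + w') i)]
          calc (v + w') i = v i + w' i := rfl
            _ = (phi4 (dA (v i)) * ω + phi4 (dB (v i)) * ω^2)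
                + (phi4 (dA (w' i)) * ω + phi4 (dB (w' i)) * ω^2) := by
                rw [← hdec (v i), ← hdec (w' i)]
            _ = phi4 (dA (v i) + dA (w' i)) * ω + phi4 (dB (v i) + dB (w' i)) * ω^2 := by
                rw [map_add, map_add]; ring
        have hkey : (∑ i, (dA ((v + w') i) + dB ((v + w') i)
            + dA ((v + w') i) * dB ((v + w') i)))
            = (∑ i, (dA (v i) + dB (v i) + dA (v i) * dB (v i)))
            + (∑ i, (dA (w' i) + dB (w' i) + dA (w' i) * dB (w' i)))
            + Qc v w' := by
          rw [← Finset.sum_add_distrib, ← Finset.sum_add_distrib]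
          apply Finset.sum_congr rfl
          intro i _
          rw [(hdadd i).1, (hdadd i).2]
          exact (by decide : ∀ a b c d : ZMod 2,
            (a + c) + (b + d) + (a + c) * (b + d)
            = (a + b + a * b) + (c + d + c * d) + (a * d + c * b)) _ _ _ _
        have h0 := hind (v + w') hvw
        rw [hkey, hind v hv, hind w' hw', zero_add, zero_add] at h0
        exact h0.symm ▸ h0
      · intro x hxΓ
        apply (hEvenChar x).mpr
        exact hind (rhoF4 ω n m x) hxΓ
  refine ⟨part1, part2, part3, ?_⟩
  constructor
  · rintro ⟨_, hU⟩
    exact part2.mp hU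
  · intro hsd
    refine ⟨part3.mpr ?_, part2.mpr hsd⟩
    intro w hw
    have hwD : w ∈ dualCodeF4 m (conjF4 m '' (C : Set _)) := by
      rw [← hsd]; exact hw
    obtain ⟨hq1, hq2⟩ := (hD w).mp hwD w hw
    apply (hwt w).mpr
    rw [← hq1]
    apply Finset.sum_congr rfl
    intro i _
    simp only
    rw [(hscale (w i)).1, (hscale (w i)).2]
    exact (by decide : ∀ a b : ZMod 2,
      a + b + a * b = a * (a + b) + b * b) _ _
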